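/- Let β > 0 and define y : (0,∞) → ℝ by y(x) := √x · K(1/(β+2), (2/(β+2))·x^((β+2)/2)), where K(ν,z) := ∫₀^∞ exp(−z·cosh t)·cosh(ν·t) dt. Then for every x > 0, y′(x) = −x^((β+1)/2) · K((β+1)/(β+2), (2/(β+2))·x^((β+2)/2)). -/

import Mathlib

open Set MeasureTheory Real Filter

-- pointwise basics
lemma cosh_ge_quad {t : ℝ} (ht : 0 ≤ t) : (1 + t + t^2/2)/2 ≤ Real.cosh t := by
  have h1 := Real.quadratic_le_exp_of_nonneg ht
  have h2 : 0 < Real.exp (-t) := Real.exp_pos _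
  rw [Real.cosh_eq]; linarith

lemma cosh_le_exp_abs (x : ℝ) : Real.cosh x ≤ Real.exp |x| := by
  rw [Real.cosh_eq]
  have h1 : Real.exp x ≤ Real.exp |x| := Real.exp_le_exp.2 (le_abs_self x)
  have h2 : Real.exp (-x) ≤ Real.exp |x| := Real.exp_le_exp.2 (neg_le_abs x)
  linarith

lemma abs_sinh_le_exp_abs (x : ℝ) : |Real.sinh x| ≤ Real.exp |x| := by
  rw [Real.abs_sinh]
  calc Real.sinh |x| ≤ Real.cosh |x| := by
        rw [Real.sinh_eq, Real.cosh_eq]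
        have := Real.exp_pos (-|x|); linarith
    _ ≤ Real.exp |x| := (Real.cosh_abs x ▸ cosh_le_exp_abs x)

-- the key gaussian domination
lemma exp_lin_cosh_le {z : ℝ} (hz : 0 < z) (a : ℝ) {t : ℝ} (ht : 0 ≤ t) :
    Real.exp (a * t - z * Real.cosh t) ≤
      Real.exp ((a - z/2)^2/z - z/2) * Real.exp (-(z/4) * (t - 2*(a - z/2)/z)^2) := by
  rw [← Real.exp_add, Real.exp_le_exp]
  have h := cosh_ge_quad ht
  have hz' : z ≠ 0 := hz.ne'
  have key : a * t - z * ((1 + t + t^2/2)/2) = (a - z/2)^2/z - z/2 + -(z/4) * (t - 2*(a - z/2)/z)^2 := by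
    field_simp; ring
  nlinarith [mul_le_mul_of_nonneg_left h hz.le]

lemma integrableOn_exp_lin_cosh {z : ℝ} (hz : 0 < z) (a : ℝ) :
    IntegrableOn (fun t => Real.exp (a * t - z * Real.cosh t)) (Ioi (0:ℝ)) := by
  have hb : (0:ℝ) < z/4 := by linarith
  have hg : Integrable (fun t : ℝ =>
      Real.exp ((a - z/2)^2/z - z/2) * Real.exp (-(z/4) * (t - 2*(a - z/2)/z)^2)) := by
    exact ((integrable_exp_neg_mul_sq hb).comp_sub_right (2*(a - z/2)/z)).const_mul _
  refine Integrable.mono' hg.integrableOn ?_ ?_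
  · exact (Continuous.aestronglyMeasurable (by continuity)).restrict
  · filter_upwards [ae_restrict_mem measurableSet_Ioi] with t ht
    rw [Real.norm_eq_abs, abs_of_pos (Real.exp_pos _)]
    exact exp_lin_cosh_le hz a (le_of_lt ht)

lemma integrableOn_dom {z : ℝ} (hz : 0 < z) (a C : ℝ) {f : ℝ → ℝ} (hf : Continuous f)
    (hbound : ∀ t, 0 ≤ t → |f t| ≤ C * Real.exp (a * t)) :
    IntegrableOn (fun t => Real.exp (-z * Real.cosh t) * f t) (Ioi (0:ℝ)) := by
  refine Integrable.mono' (((integrableOn_exp_lin_cosh hz a)).const_mul C) ?_ ?_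
  · exact (Continuous.aestronglyMeasurable (by continuity)).restrict
  · filter_upwards [ae_restrict_mem measurableSet_Ioi] with t ht
    rw [Real.norm_eq_abs, abs_mul, abs_of_pos (Real.exp_pos _)]
    calc Real.exp (-z * Real.cosh t) * |f t|
        ≤ Real.exp (-z * Real.cosh t) * (C * Real.exp (a*t)) := by
          exact mul_le_mul_of_nonneg_left (hbound t ht.le) (Real.exp_pos _).le
      _ = C * Real.exp (a * t - z * Real.cosh t) := by
          rw [sub_eq_add_neg, Real.exp_add]; ring

/-- Modified Bessel function of the second kind (integral representation):
`K(ν, z) = ∫₀^∞ exp(−z cosh t) cosh(ν t) dt`. -/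
noncomputable def besselK (ν z : ℝ) : ℝ :=
  ∫ t in Set.Ioi (0 : ℝ), Real.exp (-z * Real.cosh t) * Real.cosh (ν * t)

lemma besselK_neg (ν z : ℝ) : besselK (-ν) z = besselK ν z := by
  unfold besselK
  congr 1; ext t; rw [show -ν * t = -(ν * t) by ring, Real.cosh_neg]

lemma integrableOn_besselK {z : ℝ} (hz : 0 < z) (ν : ℝ) :
    IntegrableOn (fun t => Real.exp (-z * Real.cosh t) * Real.cosh (ν * t)) (Ioi (0:ℝ)) := by
  refine integrableOn_dom hz |ν| 1 (by continuity) (fun t ht => ?_)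
  rw [one_mul, abs_of_pos (Real.cosh_pos _)]
  calc Real.cosh (ν*t) ≤ Real.exp |ν*t| := cosh_le_exp_abs _
    _ = Real.exp (|ν| * t) := by rw [abs_mul, abs_of_nonneg ht]

lemma integrableOn_besselK_deriv {z : ℝ} (hz : 0 < z) (ν : ℝ) :
    IntegrableOn (fun t => Real.exp (-z * Real.cosh t) * (Real.cosh t * Real.cosh (ν * t)))
      (Ioi (0:ℝ)) := by
  refine integrableOn_dom hz (1 + |ν|) 1 (by continuity) (fun t ht => ?_)
  rw [one_mul, abs_mul, abs_of_pos (Real.cosh_pos _), abs_of_pos (Real.cosh_pos _)]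
  calc Real.cosh t * Real.cosh (ν*t) ≤ Real.exp |t| * Real.exp |ν*t| :=
        mul_le_mul (cosh_le_exp_abs _) (cosh_le_exp_abs _) (Real.cosh_pos _).le (Real.exp_pos _).le
    _ = Real.exp ((1+|ν|) * t) := by
        rw [← Real.exp_add, abs_mul, abs_of_nonneg ht]; ring_nf

lemma integrableOn_sinh_sinh {z : ℝ} (hz : 0 < z) (ν : ℝ) :
    IntegrableOn (fun t => Real.exp (-z * Real.cosh t) * (Real.sinh t * Real.sinh (ν * t)))
      (Ioi (0:ℝ)) := by
  refine integrableOn_dom hz (1 + |ν|) 1 (by continuity) (fun t ht => ?_)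
  rw [one_mul, abs_mul]
  calc |Real.sinh t| * |Real.sinh (ν*t)| ≤ Real.exp |t| * Real.exp |ν*t| :=
        mul_le_mul (abs_sinh_le_exp_abs _) (abs_sinh_le_exp_abs _) (abs_nonneg _) (Real.exp_pos _).le
    _ = Real.exp ((1+|ν|) * t) := by
        rw [← Real.exp_add, abs_mul, abs_of_nonneg ht]; ring_nf

lemma key_recurrence {z : ℝ} (hz : 0 < z) (ν : ℝ) :
    z * ∫ t in Ioi (0:ℝ), Real.exp (-z * Real.cosh t) * (Real.sinh t * Real.sinh (ν * t))
      = ν * besselK ν z := by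
  set F : ℝ → ℝ := fun t => Real.exp (-z * Real.cosh t) * Real.sinh (ν * t) with hF
  set F' : ℝ → ℝ := fun t => Real.exp (-z * Real.cosh t) *
      (ν * Real.cosh (ν * t) - z * (Real.sinh t * Real.sinh (ν * t))) with hF'
  have hderiv : ∀ t : ℝ, HasDerivAt F (F' t) t := by
    intro t
    have h1 : HasDerivAt (fun t => Real.exp (-z * Real.cosh t))
        (Real.exp (-z * Real.cosh t) * (-z * Real.sinh t)) t :=
      ((Real.hasDerivAt_cosh t).const_mul (-z)).exp
    have h2 : HasDerivAt (fun t => Real.sinh (ν * t)) (Real.cosh (ν * t) * ν) t := by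
      have := ((hasDerivAt_id t).const_mul ν).sinh
      simp only [id, mul_one] at this
      exact this
    have := h1.mul h2
    convert this using 1
    · rfl
    · rfl
    · rfl
    simp only [hF']; ring
  have hint : IntegrableOn F' (Ioi (0:ℝ)) := by
    have h1 := (integrableOn_besselK hz ν).const_mul ν
    have h2 := (integrableOn_sinh_sinh hz ν).const_mul z
    refine (h1.sub h2).congr (Filter.Eventually.of_forall (fun t => ?_))
    simp only [hF', Pi.sub_apply]; ring
  have habs : ∀ t : ℝ, 0 ≤ t → ‖F t‖ ≤ Real.exp (|ν| * t - z * Real.cosh t) := by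
    intro t ht
    rw [Real.norm_eq_abs, hF]
    simp only
    rw [abs_mul, abs_of_pos (Real.exp_pos _),
      show Real.exp (|ν| * t - z * Real.cosh t)
        = Real.exp (-z * Real.cosh t) * Real.exp (|ν| * t) by rw [← Real.exp_add]; congr 1; ring]
    refine mul_le_mul_of_nonneg_left ?_ (Real.exp_pos _).le
    calc |Real.sinh (ν*t)| ≤ Real.exp |ν*t| := abs_sinh_le_exp_abs _
      _ = Real.exp (|ν| * t) := by rw [abs_mul, abs_of_nonneg ht]
  have htends : Tendsto F atTop (nhds 0) := by
    set c := 2*(|ν| - z/2)/z with hc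
    set C := Real.exp ((|ν| - z/2)^2/z - z/2) with hC
    apply squeeze_zero_norm' (a := fun t => C * Real.exp (-(z/4) * (t - c)^2))
    · filter_upwards [Filter.eventually_ge_atTop (0:ℝ)] with t ht
      exact (habs t ht).trans (exp_lin_cosh_le hz |ν| ht)
    · have h1 : Tendsto (fun t : ℝ => (t - c)^2) atTop atTop := by
        have := tendsto_atTop_add_const_right atTop (-c) tendsto_id
        simpa [sub_eq_add_neg, pow_two] using this.atTop_mul_atTop₀ this
      have h2 : Tendsto (fun t : ℝ => -(z/4) * (t - c)^2) atTop atBot :=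
        h1.const_mul_atTop_of_neg (by linarith)
      have h3 := (Real.tendsto_exp_atBot.comp h2).const_mul C
      simpa using h3
  have hFTC := integral_Ioi_of_hasDerivAt_of_tendsto
      (f := F) (f' := F') (a := 0) (m := 0)
      (hderiv 0).continuousAt.continuousWithinAt
      (fun t _ => hderiv t) hint htends
  have hF0 : F 0 = 0 := by simp [hF]
  rw [hF0, sub_zero] at hFTC
  have hsplit : ∫ t in Ioi (0:ℝ), F' t
      = ν * besselK ν z - z * ∫ t in Ioi (0:ℝ), Real.exp (-z * Real.cosh t) * (Real.sinh t * Real.sinh (ν * t)) := by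
    unfold besselK
    rw [← integral_const_mul, ← integral_const_mul,
      ← integral_sub ((integrableOn_besselK hz ν).const_mul ν)
        ((integrableOn_sinh_sinh hz ν).const_mul z)]
    refine integral_congr_ae (Filter.Eventually.of_forall (fun t => ?_))
    simp only [hF']; ring
  rw [hFTC] at hsplit
  linarith [hsplit]

lemma besselK_hasDerivAt (ν : ℝ) {z : ℝ} (hz : 0 < z) :
    HasDerivAt (besselK ν)
      (-∫ t in Ioi (0:ℝ), Real.exp (-z * Real.cosh t) * (Real.cosh t * Real.cosh (ν * t))) z := by
  have hε : (0:ℝ) < z/2 := by linarith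
  set F : ℝ → ℝ → ℝ := fun x t => Real.exp (-x * Real.cosh t) * Real.cosh (ν * t) with hFdef
  set F' : ℝ → ℝ → ℝ := fun x t =>
      -(Real.exp (-x * Real.cosh t) * (Real.cosh t * Real.cosh (ν * t))) with hF'def
  have hdiff : ∀ t : ℝ, ∀ x ∈ Metric.ball z (z/2), HasDerivAt (fun x => F x t) (F' x t) x := by
    intro t x _
    have h1 : HasDerivAt (fun x : ℝ => -x * Real.cosh t) (-Real.cosh t) x := by
      simpa using ((hasDerivAt_id x).neg.mul_const (Real.cosh t))
    have := (h1.exp).mul_const (Real.cosh (ν * t))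
    convert this using 1
    · rfl
    · rfl
    simp only [hF'def]; ring
  have hbound : ∀ t ∈ Ioi (0:ℝ), ∀ x ∈ Metric.ball z (z/2),
      ‖F' x t‖ ≤ Real.exp ((1 + |ν|) * t - (z/2) * Real.cosh t) := by
    intro t ht x hx
    have hx2 : z/2 ≤ x := by
      rw [Metric.mem_ball, Real.dist_eq, abs_lt] at hx; linarith
    have hct : 0 < Real.cosh t := Real.cosh_pos t
    rw [Real.norm_eq_abs, hF'def]
    simp only [abs_neg]
    rw [abs_mul, abs_of_pos (Real.exp_pos _), abs_mul, abs_of_pos hct,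
      abs_of_pos (Real.cosh_pos _),
      show Real.exp ((1+|ν|) * t - (z/2) * Real.cosh t)
        = Real.exp (-(z/2) * Real.cosh t) * (Real.exp t * Real.exp (|ν| * t)) by
          rw [← Real.exp_add, ← Real.exp_add]; congr 1; ring]
    have e1 : Real.exp (-x * Real.cosh t) ≤ Real.exp (-(z/2) * Real.cosh t) := by
      rw [Real.exp_le_exp]; nlinarith
    have e2 : Real.cosh t ≤ Real.exp t := by
      calc Real.cosh t ≤ Real.exp |t| := cosh_le_exp_abs t
        _ = Real.exp t := by rw [abs_of_nonneg (le_of_lt ht)]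
    have e3 : Real.cosh (ν * t) ≤ Real.exp (|ν| * t) := by
      calc Real.cosh (ν*t) ≤ Real.exp |ν*t| := cosh_le_exp_abs _
        _ = Real.exp (|ν| * t) := by rw [abs_mul, abs_of_nonneg (le_of_lt (show (0:ℝ) < t from ht))]
    refine mul_le_mul e1 (mul_le_mul e2 e3 (Real.cosh_pos _).le (Real.exp_pos _).le)
      (by positivity) (Real.exp_pos _).le
  have hmain := hasDerivAt_integral_of_dominated_loc_of_deriv_le
    (μ := volume.restrict (Ioi (0:ℝ))) (F := F) (F' := F') (x₀ := z)
    (bound := fun t => Real.exp ((1 + |ν|) * t - (z/2) * Real.cosh t))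
    (Metric.ball_mem_nhds z hε)
    (Filter.Eventually.of_forall (fun x =>
      (Continuous.aestronglyMeasurable (by fun_prop)).restrict))
    (integrableOn_besselK hz ν)
    (Continuous.aestronglyMeasurable (by fun_prop)).restrict
    (by filter_upwards [ae_restrict_mem measurableSet_Ioi] with t ht
        exact hbound t ht)
    (integrableOn_exp_lin_cosh hε (1 + |ν|))
    (Filter.Eventually.of_forall (fun t => hdiff t))
  have := hmain.2
  unfold besselK
  convert this using 1
  · rfl
  · rfl
  rw [← MeasureTheory.integral_neg]

lemma besselK_hasDerivAt' (ν : ℝ) {z : ℝ} (hz : 0 < z) :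
    HasDerivAt (besselK ν) (-(besselK (ν - 1) z) - ν / z * besselK ν z) z := by
  convert besselK_hasDerivAt ν hz using 1
  have hsum : (∫ t in Ioi (0:ℝ), Real.exp (-z * Real.cosh t) * (Real.cosh t * Real.cosh (ν * t)))
      = (∫ t in Ioi (0:ℝ), Real.exp (-z * Real.cosh t) * Real.cosh ((ν-1) * t))
        + ∫ t in Ioi (0:ℝ), Real.exp (-z * Real.cosh t) * (Real.sinh t * Real.sinh (ν * t)) := by
    rw [← integral_add (integrableOn_besselK hz (ν-1)) (integrableOn_sinh_sinh hz ν)]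
    refine integral_congr_ae (Filter.Eventually.of_forall (fun t => ?_))
    simp only
    rw [show (ν-1)*t = ν*t - t by ring, Real.cosh_sub]; ring
  have hrec : (∫ t in Ioi (0:ℝ), Real.exp (-z * Real.cosh t) * (Real.sinh t * Real.sinh (ν * t)))
      = ν / z * besselK ν z := by
    have := key_recurrence hz ν
    rw [div_mul_eq_mul_div, eq_div_iff hz.ne']
    linarith
  rw [hsum, hrec]
  unfold besselK
  ring

/-- for `β > 0`, the derivative of
`y(x) = √x · K(1/(β+2), (2/(β+2)) x^((β+2)/2))` on `(0,∞)` is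
`y′(x) = −x^((β+1)/2) · K((β+1)/(β+2), (2/(β+2)) x^((β+2)/2))`. -/
theorem stmt5 (β : ℝ) (hβ : 0 < β) :
    ∀ x ∈ Ioi (0 : ℝ),
      HasDerivAt (fun x : ℝ =>
          Real.sqrt x * besselK (1 / (β + 2)) (2 / (β + 2) * x ^ ((β + 2) / 2)))
        (-(x ^ ((β + 1) / 2)) *
          besselK ((β + 1) / (β + 2)) (2 / (β + 2) * x ^ ((β + 2) / 2))) x := by
  intro x hx
  have hx0 : (0:ℝ) < x := hx
  have hb2 : (0:ℝ) < β + 2 := by linarith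
  set ν : ℝ := 1 / (β + 2) with hν
  set p : ℝ := (β + 2) / 2 with hp
  set c : ℝ := 2 / (β + 2) with hc
  have hxp : (0:ℝ) < x ^ p := Real.rpow_pos_of_pos hx0 p
  have hcpos : (0:ℝ) < c := by rw [hc]; positivity
  have hz : (0:ℝ) < c * x ^ p := by positivity
  have hinner : HasDerivAt (fun x : ℝ => c * x ^ p) (c * (p * x ^ (p - 1))) x :=
    (Real.hasDerivAt_rpow_const (Or.inl hx0.ne')).const_mul c
  have hK : HasDerivAt (fun x : ℝ => besselK ν (c * x ^ p))
      ((-(besselK (ν - 1) (c * x ^ p)) - ν / (c * x ^ p) * besselK ν (c * x ^ p)) *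
        (c * (p * x ^ (p - 1)))) x :=
    by have := (besselK_hasDerivAt' ν hz).comp x hinner; exact this
  have hsqrt : HasDerivAt Real.sqrt (1 / (2 * Real.sqrt x)) x := Real.hasDerivAt_sqrt hx0.ne'
  have hmain := hsqrt.mul hK
  convert hmain using 1
  · rfl
  · rfl
  · rfl
  -- now the algebraic identity
  have hKν1 : besselK (ν - 1) (c * x ^ p) = besselK ((β + 1)/(β + 2)) (c * x ^ p) := by
    rw [← besselK_neg ((β + 1)/(β + 2))]
    congr 1
    rw [hν]; field_simp; ring
  rw [hKν1, Real.sqrt_eq_rpow]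
  set K : ℝ := besselK ν (c * x ^ p)
  set K1 : ℝ := besselK ((β + 1)/(β + 2)) (c * x ^ p)
  have hs : (0:ℝ) < x ^ ((1:ℝ)/2) := Real.rpow_pos_of_pos hx0 _
  have hA : (0:ℝ) < x ^ ((β + 1)/2) := Real.rpow_pos_of_pos hx0 _
  have hB : (0:ℝ) < x ^ (p - 1) := Real.rpow_pos_of_pos hx0 _
  have hsB : x ^ ((1:ℝ)/2) * x ^ (p - 1) = x ^ ((β + 1)/2) := by
    rw [← Real.rpow_add hx0]; congr 1; rw [hp]; ring
  have hsA : x ^ ((1:ℝ)/2) * x ^ ((β + 1)/2) = x ^ p := by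
    rw [← Real.rpow_add hx0]; congr 1; rw [hp]; ring
  have hcν : c = 2 * ν := by rw [hc, hν]; ring
  have hν0 : ν ≠ 0 := by rw [hν]; positivity
  have hcp : c * p = 1 := by rw [hc, hp]; field_simp
  have hcpB : c * (p * x ^ (p - 1)) = x ^ (p - 1) := by rw [← mul_assoc, hcp, one_mul]
  rw [hcpB]
  field_simp
  rw [hcν]
  linear_combination (4*ν*K1*x^p*(x^((1:ℝ)/2)) + 2*ν*K*(x^((1:ℝ)/2))) * hsB + 2*ν*K * hsA
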